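/- Let μ ∈ L^∞(ℍ). Then for every ζ ∈ ℍ* the integral Φ_μ(ζ) := −(6/π) ∫_ℍ μ(z) (z − ζ)⁻⁴ dA(z) converges absolutely, the function Φ_μ is holomorphic on ℍ*, and |Φ_μ(ζ)| · (Im ζ)² ≤ (3/2) ‖μ‖_{L^∞(ℍ)} for all ζ ∈ ℍ*. -/

import Mathlib

open MeasureTheory Real Set Filter Topology

lemma bers_inner_integrable0 {c : ℝ} (hc : 0 < c) :
    Integrable (fun x : ℝ => ((x ^ 2 + c ^ 2) ^ 2)⁻¹) := by
  set m := min 1 (c ^ 2) with hm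
  have hm1 : m ≤ 1 := min_le_left _ _
  have hm2 : m ≤ c ^ 2 := min_le_right _ _
  have hmpos : 0 < m := lt_min one_pos (by positivity)
  have hcont : Continuous fun x : ℝ => ((x ^ 2 + c ^ 2) ^ 2)⁻¹ := by
    apply Continuous.inv₀ (by continuity)
    intro x; positivity
  refine ((integrable_inv_one_add_sq.const_mul ((c ^ 2 * m)⁻¹)).mono'
    hcont.aestronglyMeasurable (ae_of_all _ fun x => ?_))
  rw [Real.norm_eq_abs, abs_of_nonneg (by positivity)]
  rw [← mul_inv, inv_le_inv₀ (by positivity) (by positivity)]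
  have h1 : m * (1 + x ^ 2) ≤ x ^ 2 + c ^ 2 := by nlinarith
  nlinarith [sq_nonneg (x ^ 2 + c ^ 2)]

lemma bers_inner_integral0 {c : ℝ} (hc : 0 < c) :
    ∫ x : ℝ, ((x ^ 2 + c ^ 2) ^ 2)⁻¹ = π / (2 * c ^ 3) := by
  have hc' : c ≠ 0 := hc.ne'
  set F : ℝ → ℝ := fun x => Real.arctan (x / c) / (2 * c ^ 3) + x / (2 * c ^ 2 * (x ^ 2 + c ^ 2))
    with hF
  have hderiv : ∀ x : ℝ, HasDerivAt F (((x ^ 2 + c ^ 2) ^ 2)⁻¹) x := by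
    intro x
    have hden : 2 * c ^ 2 * (x ^ 2 + c ^ 2) ≠ 0 := by positivity
    have h1 : HasDerivAt (fun x : ℝ => x / c) (1 / c) x := (hasDerivAt_id x).div_const c
    have h2 : HasDerivAt (fun x : ℝ => Real.arctan (x / c))
        ((1 / (1 + (x / c) ^ 2)) * (1 / c)) x :=
      ((Real.hasDerivAt_arctan (x / c)).comp x h1 :)
    have h3 := h2.div_const (2 * c ^ 3)
    have h4 : HasDerivAt (fun x : ℝ => 2 * c ^ 2 * (x ^ 2 + c ^ 2))
        (2 * c ^ 2 * (2 * x)) x := by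
      simpa using (((hasDerivAt_pow 2 x).add_const (c ^ 2)).const_mul (2 * c ^ 2))
    have h5 := (hasDerivAt_id x).div h4 hden
    have := h3.add h5
    refine this.congr_deriv ?_
    have h6 : 1 + (x / c) ^ 2 ≠ 0 := by positivity
    simp only [id_eq]
    field_simp
    ring
  have hInt := bers_inner_integrable0 hc
  have hsmall : Tendsto (fun x : ℝ => x / (2 * c ^ 2 * (x ^ 2 + c ^ 2))) atTop (𝓝 0) := by
    have hden : Tendsto (fun x : ℝ => 2 * c ^ 2 * x) atTop atTop :=
      tendsto_id.const_mul_atTop (by positivity)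
    refine tendsto_of_tendsto_of_tendsto_of_le_of_le' tendsto_const_nhds
      hden.inv_tendsto_atTop ?_ ?_
    · filter_upwards [eventually_ge_atTop (1 : ℝ)] with x hx
      positivity
    · filter_upwards [eventually_ge_atTop (1 : ℝ)] with x hx
      rw [Pi.inv_apply, ← one_div, div_le_div_iff₀ (by positivity) (by positivity)]
      nlinarith
  have hsmall' : Tendsto (fun x : ℝ => x / (2 * c ^ 2 * (x ^ 2 + c ^ 2))) atBot (𝓝 0) := by
    have : (fun x : ℝ => x / (2 * c ^ 2 * (x ^ 2 + c ^ 2)))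
        = (fun x : ℝ => -((-x) / (2 * c ^ 2 * ((-x) ^ 2 + c ^ 2)))) := by
      funext x; ring
    rw [this]
    simpa using (hsmall.comp tendsto_neg_atBot_atTop).neg
  have htop : Tendsto F atTop (𝓝 (π / 2 / (2 * c ^ 3) + 0)) := by
    refine Tendsto.add (Tendsto.div_const ?_ _) hsmall
    exact (Real.tendsto_arctan_atTop.mono_right nhdsWithin_le_nhds).comp
      (tendsto_id.atTop_div_const hc)
  have hbot : Tendsto F atBot (𝓝 (-(π / 2) / (2 * c ^ 3) + 0)) := by
    refine Tendsto.add (Tendsto.div_const ?_ _) hsmall'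
    refine (Real.tendsto_arctan_atBot.mono_right nhdsWithin_le_nhds).comp ?_
    exact tendsto_id.atBot_div_const hc
  have := integral_of_hasDerivAt_of_tendsto hderiv hInt hbot htop
  rw [this]
  field_simp
  ring

lemma bers_inner_integrable {c : ℝ} (hc : 0 < c) (a : ℝ) :
    Integrable (fun x : ℝ => (((x - a) ^ 2 + c ^ 2) ^ 2)⁻¹) :=
  (bers_inner_integrable0 hc).comp_sub_right a

lemma bers_inner_integral {c : ℝ} (hc : 0 < c) (a : ℝ) :
    ∫ x : ℝ, (((x - a) ^ 2 + c ^ 2) ^ 2)⁻¹ = π / (2 * c ^ 3) := by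
  rw [integral_sub_right_eq_self (fun x : ℝ => ((x ^ 2 + c ^ 2) ^ 2)⁻¹) a]
  exact bers_inner_integral0 hc

lemma bers_outer_integrable {d : ℝ} (hd : 0 < d) :
    IntegrableOn (fun y : ℝ => ((y + d) ^ 3)⁻¹) (Ioi 0) := by
  have hderiv : ∀ y ∈ Ici (0 : ℝ), HasDerivAt (fun y : ℝ => -(2 * (y + d) ^ 2)⁻¹)
      (((y + d) ^ 3)⁻¹) y := by
    intro y hy
    have hyd : y + d ≠ 0 := by have := hy.out; positivity
    have h1 : HasDerivAt (fun y : ℝ => 2 * (y + d) ^ 2) (2 * (2 * (y + d))) y := by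
      simpa using (((hasDerivAt_id y).add_const d).pow 2).const_mul 2
    have := (h1.inv (by positivity)).neg
    refine this.congr_deriv ?_
    field_simp
  have hpos : ∀ y ∈ Ioi (0 : ℝ), 0 ≤ ((y + d) ^ 3)⁻¹ := by
    intro y hy; have := hy.out; positivity
  have htop : Tendsto (fun y : ℝ => -(2 * (y + d) ^ 2)⁻¹) atTop (𝓝 (-0)) := by
    refine Tendsto.neg ?_
    refine Tendsto.inv_tendsto_atTop ?_
    exact ((tendsto_pow_atTop two_ne_zero).comp (tendsto_atTop_add_const_right _ d tendsto_id)).const_mul_atTop two_pos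
  exact integrableOn_Ioi_deriv_of_nonneg' hderiv hpos htop

lemma bers_outer_integral {d : ℝ} (hd : 0 < d) :
    ∫ y in Ioi (0 : ℝ), ((y + d) ^ 3)⁻¹ = (2 * d ^ 2)⁻¹ := by
  have hderiv : ∀ y ∈ Ici (0 : ℝ), HasDerivAt (fun y : ℝ => -(2 * (y + d) ^ 2)⁻¹)
      (((y + d) ^ 3)⁻¹) y := by
    intro y hy
    have hyd : y + d ≠ 0 := by have := hy.out; positivity
    have h1 : HasDerivAt (fun y : ℝ => 2 * (y + d) ^ 2) (2 * (2 * (y + d))) y := by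
      simpa using (((hasDerivAt_id y).add_const d).pow 2).const_mul 2
    have := (h1.inv (by positivity)).neg
    refine this.congr_deriv ?_
    field_simp
  have hpos : ∀ y ∈ Ioi (0 : ℝ), 0 ≤ ((y + d) ^ 3)⁻¹ := by
    intro y hy; have := hy.out; positivity
  have htop : Tendsto (fun y : ℝ => -(2 * (y + d) ^ 2)⁻¹) atTop (𝓝 (-0)) := by
    refine Tendsto.neg ?_
    refine Tendsto.inv_tendsto_atTop ?_
    exact ((tendsto_pow_atTop two_ne_zero).comp (tendsto_atTop_add_const_right _ d tendsto_id)).const_mul_atTop two_pos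
  have := integral_Ioi_of_hasDerivAt_of_nonneg' hderiv hpos htop
  rw [this]
  simp

noncomputable def bersG (ζ : ℂ) : ℝ × ℝ → ℝ :=
  fun p => (((p.1 - ζ.re) ^ 2 + (p.2 - ζ.im) ^ 2) ^ 2)⁻¹

lemma bersG_inner {ζ : ℂ} {y : ℝ} (hy : y ∈ Ioi (0:ℝ)) (hζ : ζ.im < 0) :
    ∫ x, bersG ζ (x, y) = (π / 2) * ((y + -ζ.im) ^ 3)⁻¹ := by
  have hc : 0 < y - ζ.im := by have := hy.out; linarith
  have h : (fun x => bersG ζ (x, y)) = fun x => (((x - ζ.re) ^ 2 + (y - ζ.im) ^ 2) ^ 2)⁻¹ := rfl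
  rw [h, bers_inner_integral hc ζ.re, show y + -ζ.im = y - ζ.im from by ring]
  rw [div_eq_mul_inv, mul_inv, ← mul_assoc, ← div_eq_mul_inv π 2]

lemma bersG_integrable {ζ : ℂ} (hζ : ζ.im < 0) :
    Integrable (bersG ζ) (volume.prod (volume.restrict (Ioi 0))) := by
  have hmeas : AEStronglyMeasurable (bersG ζ) (volume.prod (volume.restrict (Ioi 0))) := by
    apply Measurable.aestronglyMeasurable
    exact ((((measurable_fst.sub measurable_const).pow_const 2).add
      ((measurable_snd.sub measurable_const).pow_const 2)).pow_const 2).inv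
  rw [integrable_prod_iff' hmeas]
  constructor
  · filter_upwards [ae_restrict_mem measurableSet_Ioi] with y hy
    have hc : 0 < y - ζ.im := by have := hy.out; linarith
    exact bers_inner_integrable hc ζ.re
  · apply Integrable.congr ((bers_outer_integrable (neg_pos.mpr hζ)).const_mul (π / 2))
    filter_upwards [ae_restrict_mem measurableSet_Ioi] with y hy
    have h : (fun x => ‖bersG ζ (x, y)‖) = fun x => bersG ζ (x, y) := by
      funext x
      show ‖(((x - ζ.re) ^ 2 + (y - ζ.im) ^ 2) ^ 2)⁻¹‖ = _
      rw [Real.norm_eq_abs, abs_of_nonneg (by positivity)]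
      rfl
    rw [h, bersG_inner hy hζ]

lemma bersG_integral {ζ : ℂ} (hζ : ζ.im < 0) :
    ∫ p, bersG ζ p ∂(volume.prod (volume.restrict (Ioi 0))) = π / (4 * ζ.im ^ 2) := by
  rw [integral_prod_symm _ (bersG_integrable hζ)]
  have hd : 0 < -ζ.im := neg_pos.mpr hζ
  have h : ∀ᵐ y ∂(volume.restrict (Ioi (0:ℝ))),
      (∫ x, bersG ζ (x, y)) = (π / 2) * ((y + -ζ.im) ^ 3)⁻¹ := by
    filter_upwards [ae_restrict_mem measurableSet_Ioi] with y hy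
    exact bersG_inner hy hζ
  rw [integral_congr_ae h, integral_const_mul, bers_outer_integral hd]
  rw [div_eq_mul_inv, div_eq_mul_inv, mul_assoc, ← mul_inv]
  congr 2
  ring




lemma bers_norm_eq (ζ z : ℂ) : ‖(z - ζ) ^ 4‖⁻¹ = bersG ζ (z.re, z.im) := by
  have h1 : ‖(z - ζ) ^ 4‖ = (‖z - ζ‖ ^ 2) ^ 2 := by rw [norm_pow]; ring
  have h2 : ‖z - ζ‖ ^ 2 = (z.re - ζ.re) ^ 2 + (z.im - ζ.im) ^ 2 := by
    rw [Complex.sq_norm, Complex.normSq_apply, Complex.sub_re,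
      Complex.sub_im]
    ring
  rw [h1, h2]
  rfl

lemma bers_restrict_eq :
    (volume : Measure ℂ).restrict {z : ℂ | 0 < z.im} =
      Measure.map Complex.measurableEquivRealProd.symm
        ((volume : Measure ℝ).prod ((volume : Measure ℝ).restrict (Ioi 0))) := by
  have hS : MeasurableSet {z : ℂ | 0 < z.im} :=
    measurableSet_lt measurable_const Complex.measurable_im
  have h1 : (volume : Measure ℂ) =
      Measure.map Complex.measurableEquivRealProd.symm (volume : Measure (ℝ × ℝ)) :=
    (Complex.volume_preserving_equiv_real_prod.symm Complex.measurableEquivRealProd).map_eq.symm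
  rw [h1, Measure.restrict_map Complex.measurableEquivRealProd.symm.measurable hS]
  congr 1
  have h2 : (⇑Complex.measurableEquivRealProd.symm ⁻¹' {z : ℂ | 0 < z.im})
      = (univ : Set ℝ) ×ˢ Ioi (0 : ℝ) := by
    ext p
    simp [Complex.measurableEquivRealProd_symm_apply, Set.mem_prod]
  rw [h2, Measure.volume_eq_prod ℝ ℝ, ← Measure.prod_restrict, Measure.restrict_univ]

lemma bers_kernel_integrableOn {ζ : ℂ} (hζ : ζ.im < 0) :
    IntegrableOn (fun z : ℂ => ‖(z - ζ) ^ 4‖⁻¹) {z : ℂ | 0 < z.im} volume := by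
  rw [IntegrableOn, bers_restrict_eq, integrable_map_equiv]
  have : ((fun z : ℂ => ‖(z - ζ) ^ 4‖⁻¹) ∘ Complex.measurableEquivRealProd.symm) = bersG ζ := by
    funext p
    simp only [Function.comp_apply, Complex.measurableEquivRealProd_symm_apply]
    rw [bers_norm_eq]
  rw [this]
  exact bersG_integrable hζ

lemma bers_kernel_integral {ζ : ℂ} (hζ : ζ.im < 0) :
    ∫ z in {z : ℂ | 0 < z.im}, ‖(z - ζ) ^ 4‖⁻¹ = π / (4 * ζ.im ^ 2) := by
  rw [bers_restrict_eq, integral_map_equiv]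
  have : ((fun z : ℂ => ‖(z - ζ) ^ 4‖⁻¹) ∘ Complex.measurableEquivRealProd.symm) = bersG ζ := by
    funext p
    simp only [Function.comp_apply, Complex.measurableEquivRealProd_symm_apply]
    rw [bers_norm_eq]
  calc (∫ p, ‖(Complex.measurableEquivRealProd.symm p - ζ) ^ 4‖⁻¹
        ∂(volume.prod (volume.restrict (Ioi 0))))
      = ∫ p, bersG ζ p ∂(volume.prod (volume.restrict (Ioi 0))) := by
        exact integral_congr_ae (ae_of_all _ fun p => congrFun this p)
    _ = π / (4 * ζ.im ^ 2) := bersG_integral hζ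

/-- For `μ ∈ L^∞(ℍ)`, the integral
`Φ_μ(ζ) = −(6/π) ∫_ℍ μ(z)(z − ζ)⁻⁴ dA(z)` converges absolutely for every `ζ ∈ ℍ*`, the
function `Φ_μ` is holomorphic on ℍ*, and `|Φ_μ(ζ)|·(Im ζ)² ≤ (3/2)·‖μ‖_{L^∞(ℍ)}` on ℍ*. -/
theorem bers_derivative_integral_holomorphic_and_bound (μ : ℂ → ℂ) (hμm : Measurable μ)
    (hμb : eLpNorm μ ⊤ (volume.restrict {z : ℂ | 0 < z.im}) ≠ ⊤) :
    (∀ ζ : ℂ, ζ.im < 0 →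
      IntegrableOn (fun z : ℂ => μ z / (z - ζ) ^ 4) {z : ℂ | 0 < z.im} volume) ∧
    DifferentiableOn ℂ
      (fun ζ : ℂ => -(6 / Real.pi : ℂ) * ∫ z in {z : ℂ | 0 < z.im}, μ z / (z - ζ) ^ 4)
      {ζ : ℂ | ζ.im < 0} ∧
    ∀ ζ : ℂ, ζ.im < 0 →
      ‖-(6 / Real.pi : ℂ) * ∫ z in {z : ℂ | 0 < z.im}, μ z / (z - ζ) ^ 4‖ *
          ζ.im ^ 2 ≤
        (3 / 2) * (eLpNorm μ ⊤ (volume.restrict {z : ℂ | 0 < z.im})).toReal := by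
  set S : Set ℂ := {z : ℂ | 0 < z.im} with hSdef
  have hS : MeasurableSet S := measurableSet_lt measurable_const Complex.measurable_im
  set ν : Measure ℂ := volume.restrict S with hν
  set M : ℝ := (eLpNorm μ ⊤ ν).toReal with hMdef
  have hM0 : 0 ≤ M := ENNReal.toReal_nonneg
  have hM : ∀ᵐ z ∂ν, ‖μ z‖ ≤ M := by
    have h1 : ∀ᵐ z ∂ν, (‖μ z‖₊ : ENNReal) ≤ eLpNormEssSup μ ν := ae_le_eLpNormEssSup
    filter_upwards [h1] with z hz
    have h2 : eLpNorm μ ⊤ ν = eLpNormEssSup μ ν := eLpNorm_exponent_top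
    have h3 := ENNReal.toReal_mono (h2 ▸ hμb) hz
    rw [hMdef, h2]; simpa using h3
  -- pointwise norm formula
  have hnorm : ∀ (ζ z : ℂ), ‖μ z / (z - ζ) ^ 4‖ = ‖μ z‖ * ‖(z - ζ) ^ 4‖⁻¹ := by
    intro ζ z; rw [norm_div, div_eq_mul_inv]
  -- Part 1
  have part1 : ∀ ζ : ℂ, ζ.im < 0 → IntegrableOn (fun z : ℂ => μ z / (z - ζ) ^ 4) S volume := by
    intro ζ hζ
    refine Integrable.mono' ((bers_kernel_integrableOn hζ).const_mul M)
      ((hμm.div ((measurable_id.sub_const ζ).pow_const 4)).aestronglyMeasurable) ?_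
    filter_upwards [hM] with z hz
    rw [hnorm]
    gcongr
  -- Part 3
  have part3 : ∀ ζ : ℂ, ζ.im < 0 →
      ‖-(6 / Real.pi : ℂ) * ∫ z in S, μ z / (z - ζ) ^ 4‖ * ζ.im ^ 2 ≤
        (3 / 2) * M := by
    intro ζ hζ
    have him : ζ.im ≠ 0 := ne_of_lt hζ
    have hπ : (π : ℝ) ≠ 0 := Real.pi_ne_zero
    have hd2 : (0:ℝ) < ζ.im ^ 2 := by positivity
    have hInt := part1 ζ hζ
    have habs : ‖(-(6 / Real.pi : ℂ))‖ = 6 / Real.pi := by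
      have : (-(6 / Real.pi : ℂ)) = ((-(6 / Real.pi) : ℝ) : ℂ) := by push_cast; ring
      rw [this, Complex.norm_real, Real.norm_eq_abs, abs_neg, abs_of_nonneg (by positivity)]
    have hIb : ‖∫ z in S, μ z / (z - ζ) ^ 4‖ ≤ M * (π / (4 * ζ.im ^ 2)) := by
      refine (norm_integral_le_integral_norm _).trans ?_
      have hle : ∫ z in S, ‖μ z / (z - ζ) ^ 4‖ ≤ ∫ z in S, M * ‖(z - ζ) ^ 4‖⁻¹ := by
        refine integral_mono_ae hInt.norm ((bers_kernel_integrableOn hζ).const_mul M) ?_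
        filter_upwards [hM] with z hz
        rw [hnorm]
        gcongr
      refine hle.trans ?_
      rw [integral_const_mul, bers_kernel_integral hζ]
    rw [norm_mul, habs]
    have hmono := mul_le_mul_of_nonneg_right (mul_le_mul_of_nonneg_left hIb
      (by positivity : (0:ℝ) ≤ 6 / Real.pi)) hd2.le
    have heq : 6 / π * (M * (π / (4 * ζ.im ^ 2))) * ζ.im ^ 2 = 3 / 2 * M := by
      field_simp
      ring
    calc 6 / π * ‖∫ z in S, μ z / (z - ζ) ^ 4‖ * ζ.im ^ 2
        ≤ 6 / π * (M * (π / (4 * ζ.im ^ 2))) * ζ.im ^ 2 := hmono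
      _ = 3 / 2 * M := heq
  -- Part 2
  have part2 : DifferentiableOn ℂ
      (fun ζ : ℂ => -(6 / Real.pi : ℂ) * ∫ z in S, μ z / (z - ζ) ^ 4) {ζ : ℂ | ζ.im < 0} := by
    intro ζ₀ hζ₀
    have hζ₀' : ζ₀.im < 0 := hζ₀
    set d : ℝ := -ζ₀.im with hd
    have hdpos : 0 < d := neg_pos.mpr hζ₀'
    have hball : ∀ ζ ∈ Metric.ball ζ₀ (d / 4), ∀ z ∈ S,
        z - ζ ≠ 0 ∧ d / 2 ≤ ‖z - ζ‖ ∧ ‖z - ζ₀‖ / 2 ≤ ‖z - ζ‖ := by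
      intro ζ hζ z hz
      have hz' : 0 < z.im := hz
      have him : |ζ.im - ζ₀.im| ≤ ‖ζ - ζ₀‖ := by
        simpa [Complex.sub_im] using Complex.abs_im_le_norm (ζ - ζ₀)
      have hζim : ζ.im ≤ -(3 * d / 4) := by
        have := Metric.mem_ball.mp hζ
        rw [Complex.dist_eq] at this
        have h1 : ζ.im - ζ₀.im ≤ |ζ.im - ζ₀.im| := le_abs_self _
        linarith [him.trans this.le]
      have himzζ : 3 * d / 4 ≤ (z - ζ).im := by
        rw [Complex.sub_im]; linarith
      have hnormzζ : 3 * d / 4 ≤ ‖z - ζ‖ := by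
        refine himzζ.trans ?_
        refine (le_abs_self _).trans ?_
        simpa using Complex.abs_im_le_norm (z - ζ)
      have hne : z - ζ ≠ 0 := by
        intro h
        rw [h] at hnormzζ
        simp at hnormzζ
        linarith
      refine ⟨hne, by linarith, ?_⟩
      rcases le_or_gt ‖z - ζ₀‖ (3 * d / 2) with h | h
      · linarith
      · have htri : ‖z - ζ₀‖ ≤ ‖z - ζ‖ + ‖ζ - ζ₀‖ := by
          simpa using norm_sub_le_norm_sub_add_norm_sub z ζ ζ₀
        have hζζ₀ : ‖ζ - ζ₀‖ < d / 4 := by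
          have := Metric.mem_ball.mp hζ
          rwa [Complex.dist_eq] at this
        linarith
    have key := hasDerivAt_integral_of_dominated_loc_of_deriv_le
      (F := fun (ζ : ℂ) (z : ℂ) => μ z / (z - ζ) ^ 4)
      (F' := fun (ζ : ℂ) (z : ℂ) => 4 * μ z / (z - ζ) ^ 5)
      (x₀ := ζ₀) (s := Metric.ball ζ₀ (d / 4)) (μ := ν)
      (bound := fun z => (128 * M / d) * ‖(z - ζ₀) ^ 4‖⁻¹)
      (Metric.ball_mem_nhds _ (by positivity))
      (Eventually.of_forall fun ζ =>
        ((hμm.div ((measurable_id.sub_const ζ).pow_const 4)).aestronglyMeasurable))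
      (part1 ζ₀ hζ₀')
      (((hμm.const_mul 4).div ((measurable_id.sub_const ζ₀).pow_const 5)).aestronglyMeasurable)
      ?_ ?_ ?_
    · exact ((key.2.const_mul (-(6 / Real.pi : ℂ))).differentiableAt).differentiableWithinAt
    · -- bound
      filter_upwards [hM, ae_restrict_mem hS] with z hz hzS
      intro ζ hζ
      obtain ⟨hne, h1, h2⟩ := hball ζ hζ z hzS
      have hB : 0 < ‖z - ζ₀‖ := by
        rw [norm_pos_iff, sub_ne_zero]
        intro h
        have h0 : 0 < z.im := hzS
        rw [h] at h0
        linarith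
      have hA : 0 < ‖z - ζ‖ := lt_of_lt_of_le (by linarith) h1
      rw [norm_div, norm_mul]
      have h44 : ‖(4:ℂ)‖ = 4 := by norm_num
      rw [h44, norm_pow, norm_pow]
      set A := ‖z - ζ‖
      set B := ‖z - ζ₀‖
      have e1 : (B / 2) ^ 4 ≤ A ^ 4 := pow_le_pow_left₀ (by positivity) h2 4
      have e2 : (B / 2) ^ 4 * (d / 2) ≤ A ^ 4 * A :=
        mul_le_mul e1 h1 (by linarith) (by positivity)
      have hA5 : B ^ 4 * d / 32 ≤ A ^ 5 := by nlinarith [e2]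
      have step : 4 * ‖μ z‖ / A ^ 5 ≤ (4 * M) / (B ^ 4 * d / 32) :=
        div_le_div₀ (by positivity) (by linarith) (by positivity) hA5
      refine step.trans (le_of_eq ?_)
      field_simp
      ring
    · exact ((bers_kernel_integrableOn hζ₀').const_mul (128 * M / d))
    · -- differentiability
      filter_upwards [ae_restrict_mem hS] with z hzS
      intro ζ hζ
      obtain ⟨hne, -, -⟩ := hball ζ hζ z hzS
      have h1 : HasDerivAt (fun ζ : ℂ => z - ζ) (-1) ζ := by
        exact (hasDerivAt_id' ζ).const_sub z
      have h2 := h1.pow 4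
      have h3 := h2.inv (pow_ne_zero 4 hne)
      have h4 := h3.const_mul (μ z)
      have h5 : HasDerivAt (fun x => μ z / (z - x) ^ 4)
          (μ z * (-(↑(4:ℕ) * (z - ζ) ^ (4 - 1) * -1) / ((z - ζ) ^ 4) ^ 2)) ζ := by
        simpa [div_eq_mul_inv] using h4
      refine h5.congr_deriv ?_
      field_simp
      ring
  exact ⟨part1, part2, part3⟩
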